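/- Let ρ be a density matrix on ℂ^d, let {P_n}_{n∈F} be a finite family of positive semidefinite d×d matrices satisfying ∑_n P_n² = 1, let p_n = tr(P_n ρ P_n), and for each n with p_n > 0 let ρ⁽ⁿ⁾ = P_n ρ P_n / p_n. Then S(ρ) ≤ H(p) + ∑_{n : p_n > 0} p_n S(ρ⁽ⁿ⁾), i.e., the von Neumann entropy of the pre-measurement state is bounded by the Shannon entropy of the outcome distribution plus the average von Neumann entropy of the post-measurement states. (Lemma 4.1 of the paper.) -/

import Mathlib

open Matrix
open scoped BigOperators Classical ComplexOrder

/-- Von Neumann entropy of a matrix: `-∑ λᵢ log λᵢ` over its eigenvalues if it is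
Hermitian, and `0` otherwise (junk value). -/
noncomputable def vnEntropy {n : Type*} [Fintype n] [DecidableEq n]
    (A : Matrix n n ℂ) : ℝ :=
  if hA : A.IsHermitian then ∑ i, Real.negMulLog (hA.eigenvalues i) else 0

/-- Shannon entropy of a (probability) vector. -/
noncomputable def shannonEntropy {F : Type*} [Fintype F] (p : F → ℝ) : ℝ :=
  ∑ n, Real.negMulLog (p n)

lemma jensen_negMulLog {ι : Type*} [Fintype ι] (w x : ι → ℝ)
    (hw : ∀ i, 0 ≤ w i) (hw1 : ∑ i, w i ≤ 1) (hx : ∀ i, 0 ≤ x i) :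
    ∑ i, w i * Real.negMulLog (x i) ≤ Real.negMulLog (∑ i, w i * x i) := by
  have h := Real.concaveOn_negMulLog.map_add_sum_le (t := (Finset.univ : Finset ι))
      (w := w) (p := x) (v := 1 - ∑ i, w i) (q := 0)
      (fun i _ => hw i) (by ring) (fun i _ => hx i) (by linarith)
      (Set.mem_Ici.2 le_rfl)
  simpa [smul_eq_mul] using h

lemma psd_diag_nonneg {m : Type*} [Fintype m] [DecidableEq m]
    {A : Matrix m m ℂ} (hA : A.PosSemidef) (j : m) : 0 ≤ A j j := by
  have h := hA.dotProduct_mulVec_nonneg (Pi.single j 1)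
  simpa [Matrix.mulVec_single, dotProduct, Pi.single_apply, Finset.sum_ite_eq] using h

lemma psd_real_smul {m : Type*} [Fintype m] [DecidableEq m]
    {A : Matrix m m ℂ} (hA : A.PosSemidef) {c : ℝ} (hc : 0 ≤ c) :
    (c • A).PosSemidef := by
  have h1 : (c • A) = (c : ℂ) • A := by
    ext i j; simp [Complex.real_smul]
  rw [h1]
  refine Matrix.PosSemidef.of_dotProduct_mulVec_nonneg ?_ ?_
  · unfold Matrix.IsHermitian
    rw [Matrix.conjTranspose_smul, hA.1.eq]
    simp [Complex.star_def, Complex.conj_ofReal]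
  · intro x
    rw [Matrix.smul_mulVec, dotProduct_smul]
    have h0 : (0:ℂ) ≤ (c:ℂ) := by exact_mod_cast hc
    simpa [smul_eq_mul] using mul_nonneg h0 (hA.dotProduct_mulVec_nonneg x)

lemma herm_trace_eq_sum_eigenvalues {m : Type*} [Fintype m] [DecidableEq m]
    {A : Matrix m m ℂ} (hA : A.IsHermitian) :
    A.trace = ∑ i, (hA.eigenvalues i : ℂ) := by
  nth_rewrite 1 [hA.spectral_theorem]
  rw [Unitary.conjStarAlgAut_apply, Matrix.trace_mul_cycle,
    Matrix.mem_unitaryGroup_iff'.mp hA.eigenvectorUnitary.2, Matrix.one_mul,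
    Matrix.trace_diagonal]
  rfl

lemma herm_star_mul_self_mul_eq_diagonal {m : Type*} [Fintype m] [DecidableEq m]
    {A : Matrix m m ℂ} (hA : A.IsHermitian) :
    star (hA.eigenvectorUnitary : Matrix m m ℂ) * A * (hA.eigenvectorUnitary : Matrix m m ℂ)
      = Matrix.diagonal (RCLike.ofReal ∘ hA.eigenvalues) := by
  have h := hA.conjStarAlgAut_star_eigenvectorUnitary
  rwa [Unitary.conjStarAlgAut_star_apply] at h

/-- Lemma 4.1: the entropy of the pre-measurement state is bounded by the Shannon
entropy of the outcome distribution plus the average post-measurement entropy. -/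
theorem vnEntropy_le_shannon_add_avg_post_measurement
    {d : ℕ} {F : Type*} [Fintype F]
    (ρ : Matrix (Fin d) (Fin d) ℂ) (hρ : ρ.PosSemidef) (hρtr : ρ.trace = 1)
    (P : F → Matrix (Fin d) (Fin d) ℂ) (hP : ∀ n, (P n).PosSemidef)
    (hPsum : ∑ n, (P n) ^ 2 = 1)
    (p : F → ℝ) (hp : ∀ n, (p n : ℂ) = (P n * ρ * P n).trace) :
    vnEntropy ρ ≤ shannonEntropy p +
      ∑ n ∈ Finset.univ.filter (fun n => 0 < p n),
        p n * vnEntropy ((p n)⁻¹ • (P n * ρ * P n)) := by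
  classical
  set Q : F → Matrix (Fin d) (Fin d) ℂ := fun n => P n * ρ * P n with hQdef
  have hQ : ∀ n, (Q n).PosSemidef := fun n => by
    have h := hρ.mul_mul_conjTranspose_same (P n)
    rwa [(hP n).1.eq] at h
  -- existence of simultaneous diagonalization data
  have key : ∀ n, ∃ (V : Matrix (Fin d) (Fin d) ℂ) (μ : Fin d → ℝ),
      V ∈ Matrix.unitaryGroup (Fin d) ℂ ∧ (∀ k, 0 ≤ μ k) ∧
      star V * Q n * V = Matrix.diagonal (fun k => (μ k : ℂ)) ∧
      ∑ k, Real.negMulLog (μ k)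
        = Real.negMulLog (p n) + (if 0 < p n then p n * vnEntropy ((p n)⁻¹ • Q n) else 0) := by
    intro n
    by_cases hpn : 0 < p n
    · have hρnPSD : ((p n)⁻¹ • Q n).PosSemidef := psd_real_smul (hQ n) (inv_nonneg.2 hpn.le)
      have hherm := hρnPSD.1
      have hQn : Q n = (p n) • ((p n)⁻¹ • Q n) := by
        rw [smul_smul, mul_inv_cancel₀ hpn.ne', one_smul]
      have hν1 : ∑ i, hherm.eigenvalues i = 1 := by
        have h1 : ((p n)⁻¹ • Q n).trace = 1 := by
          rw [Matrix.trace_smul, ← hp n, Complex.real_smul]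
          push_cast
          rw [inv_mul_cancel₀ (by exact_mod_cast hpn.ne')]
        have h2 := herm_trace_eq_sum_eigenvalues hherm
        rw [h1] at h2
        have := h2.symm
        push_cast at this
        exact_mod_cast this
      refine ⟨hherm.eigenvectorUnitary, fun k => p n * hherm.eigenvalues k,
        hherm.eigenvectorUnitary.2,
        fun k => mul_nonneg hpn.le (hρnPSD.eigenvalues_nonneg k), ?_, ?_⟩
      · have hd : star (hherm.eigenvectorUnitary : Matrix (Fin d) (Fin d) ℂ)
            * (p n • ((p n)⁻¹ • Q n)) * (hherm.eigenvectorUnitary : Matrix (Fin d) (Fin d) ℂ)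
            = Matrix.diagonal (fun k => ((p n * hherm.eigenvalues k : ℝ) : ℂ)) := by
          rw [Matrix.mul_smul, Matrix.smul_mul, herm_star_mul_self_mul_eq_diagonal hherm]
          ext i j
          simp only [Matrix.smul_apply, Matrix.diagonal_apply, Function.comp_apply]
          split
          · simp [Complex.real_smul]
          · simp
        rw [← hQn] at hd
        exact hd
      · rw [if_pos hpn]
        have hvn : vnEntropy ((p n)⁻¹ • Q n) = ∑ i, Real.negMulLog (hherm.eigenvalues i) := by
          rw [vnEntropy, dif_pos hherm]
        rw [hvn]
        calc ∑ k, Real.negMulLog (p n * hherm.eigenvalues k)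
            = ∑ k, (hherm.eigenvalues k * Real.negMulLog (p n)
                + p n * Real.negMulLog (hherm.eigenvalues k)) := by
              simp [Real.negMulLog_mul]
          _ = (∑ k, hherm.eigenvalues k) * Real.negMulLog (p n)
                + p n * ∑ k, Real.negMulLog (hherm.eigenvalues k) := by
              rw [Finset.sum_add_distrib, Finset.sum_mul, Finset.mul_sum]
          _ = _ := by rw [hν1, one_mul]
    · have hherm := (hQ n).1
      have hsum : (p n) = ∑ k, hherm.eigenvalues k := by
        have h2 := herm_trace_eq_sum_eigenvalues hherm
        rw [← hp n] at h2
        push_cast at h2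
        exact_mod_cast h2
      have hμ0 : ∀ k, hherm.eigenvalues k = 0 := by
        have hple : p n ≤ 0 := not_lt.1 hpn
        have hge : 0 ≤ ∑ k, hherm.eigenvalues k :=
          Finset.sum_nonneg (fun k _ => (hQ n).eigenvalues_nonneg k)
        have hz : ∑ k, hherm.eigenvalues k = 0 := le_antisymm (hsum ▸ hple) hge
        intro k
        exact (Finset.sum_eq_zero_iff_of_nonneg
          (fun k _ => (hQ n).eigenvalues_nonneg k)).1 hz k (Finset.mem_univ k)
      have hpz : p n = 0 := by rw [hsum]; simp [hμ0]
      refine ⟨hherm.eigenvectorUnitary, hherm.eigenvalues, hherm.eigenvectorUnitary.2,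
        fun k => (hQ n).eigenvalues_nonneg k, ?_, ?_⟩
      · rw [herm_star_mul_self_mul_eq_diagonal hherm]; rfl
      · rw [if_neg hpn, hpz]
        simp [hμ0]
  choose V μ hV hμ0 hdiag hent using key
  set U : Matrix (Fin d) (Fin d) ℂ := (hρ.1.eigenvectorUnitary : Matrix (Fin d) (Fin d) ℂ) with hU
  set lam : Fin d → ℝ := hρ.1.eigenvalues with hlam
  set M : F → Matrix (Fin d) (Fin d) ℂ := fun n => star U * P n * V n with hM
  set D : F → Fin d → Fin d → ℝ := fun n k j => Complex.normSq (M n j k) with hD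
  have hD0 : ∀ n k j, 0 ≤ D n k j := fun n k j => Complex.normSq_nonneg _
  have hlam0 : ∀ j, 0 ≤ lam j := fun j => hρ.eigenvalues_nonneg j
  have hUU : U * star U = 1 := Matrix.mem_unitaryGroup_iff.mp hρ.1.eigenvectorUnitary.2
  have hUU' : star U * U = 1 := Matrix.mem_unitaryGroup_iff'.mp hρ.1.eigenvectorUnitary.2
  have hVV : ∀ n, (V n) * star (V n) = 1 := fun n => Matrix.mem_unitaryGroup_iff.mp (hV n)
  have hVV' : ∀ n, star (V n) * (V n) = 1 := fun n => Matrix.mem_unitaryGroup_iff'.mp (hV n)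
  have hUcancel : ∀ (X : Matrix (Fin d) (Fin d) ℂ), U * (star U * X) = X := fun X => by
    rw [← Matrix.mul_assoc, hUU, Matrix.one_mul]
  have hUcancel' : ∀ (X : Matrix (Fin d) (Fin d) ℂ), star U * (U * X) = X := fun X => by
    rw [← Matrix.mul_assoc, hUU', Matrix.one_mul]
  have hVcancel : ∀ n (X : Matrix (Fin d) (Fin d) ℂ), V n * (star (V n) * X) = X := fun n X => by
    rw [← Matrix.mul_assoc, hVV n, Matrix.one_mul]
  have hsU : star U * ρ * U = Matrix.diagonal (fun j => (lam j : ℂ)) := by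
    rw [herm_star_mul_self_mul_eq_diagonal hρ.1]; rfl
  have hstarM : ∀ n, star (M n) = star (V n) * P n * U := by
    intro n
    rw [hM]
    calc star ((star U * P n) * V n)
        = star (V n) * (star (P n) * star (star U)) := by
          rw [Matrix.star_mul, Matrix.star_mul]
      _ = star (V n) * P n * U := by
          rw [star_star, Matrix.star_eq_conjTranspose (P n), (hP n).1.eq, ← Matrix.mul_assoc]
  have hMdiag : ∀ n, star (M n) * Matrix.diagonal (fun j => (lam j : ℂ)) * M n
      = Matrix.diagonal (fun k => (μ n k : ℂ)) := by
    intro n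
    rw [← hsU, hstarM, hM, ← hdiag n, hQdef]
    simp only [Matrix.mul_assoc, hUcancel]
  have ha : ∀ n k, μ n k = ∑ j, D n k j * lam j := by
    intro n k
    have h : ((star (M n) * Matrix.diagonal fun j => (lam j : ℂ)) * M n) k k = (μ n k : ℂ) := by
      rw [hMdiag n, Matrix.diagonal_apply_eq]
    rw [Matrix.mul_apply] at h
    simp only [Matrix.mul_diagonal, Matrix.star_apply] at h
    have h2 : ∀ j, star (M n j k) * (lam j : ℂ) * M n j k = ((D n k j * lam j : ℝ) : ℂ) := by
      intro j
      rw [hD]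
      push_cast
      rw [← Complex.mul_conj (M n j k), Complex.star_def]
      ring
    rw [Finset.sum_congr rfl (fun j _ => h2 j)] at h
    rw [← Complex.ofReal_sum] at h
    exact_mod_cast h.symm
  have hb : ∀ j, ∑ n, ∑ k, D n k j = 1 := by
    intro j
    have hMM : ∑ n, M n * star (M n) = 1 := by
      have h1 : ∀ n, M n * star (M n) = star U * (P n ^ 2) * U := by
        intro n
        rw [hM, hstarM, pow_two]
        simp only [Matrix.mul_assoc, hVcancel]
      rw [Finset.sum_congr rfl (fun n _ => h1 n)]
      have h2 : ∑ n, star U * (P n ^ 2) * U = star U * (∑ n, P n ^ 2) * U := by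
        rw [← Finset.sum_mul, ← Finset.mul_sum]
      rw [h2, hPsum, Matrix.mul_one, hUU']
    have h := congrArg (fun A => A j j) hMM
    simp only [Finset.sum_apply, Matrix.sum_apply, Matrix.one_apply_eq] at h
    have h2 : ∀ n, (M n * star (M n)) j j = ((∑ k, D n k j : ℝ) : ℂ) := by
      intro n
      rw [Matrix.mul_apply]
      push_cast
      refine Finset.sum_congr rfl (fun k _ => ?_)
      rw [Matrix.star_apply, hD, ← Complex.mul_conj (M n j k), Complex.star_def]
    rw [Finset.sum_congr rfl (fun n _ => h2 n), ← Complex.ofReal_sum] at h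
    exact_mod_cast h
  have hc : ∀ n k, ∑ j, D n k j ≤ 1 := by
    intro n k
    have hMsM : star (M n) * M n = star (V n) * (P n ^ 2) * V n := by
      rw [hM, hstarM, pow_two]
      simp only [Matrix.mul_assoc, hUcancel]
    have hsum1 : ∑ m, star (V n) * (P m ^ 2) * V n = 1 := by
      have h2 : ∑ m, star (V n) * (P m ^ 2) * V n = star (V n) * (∑ m, P m ^ 2) * V n := by
        rw [← Finset.sum_mul, ← Finset.mul_sum]
      rw [h2, hPsum, Matrix.mul_one, hVV' n]
    have hterm : ∀ m, (0:ℂ) ≤ (star (V n) * (P m ^ 2) * V n) k k := by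
      intro m
      have hpsd : (star (V n) * (P m ^ 2) * V n).PosSemidef := by
        have := ((hP m).pow 2).conjTranspose_mul_mul_same (V n : Matrix (Fin d) (Fin d) ℂ)
        rwa [Matrix.star_eq_conjTranspose]
      exact psd_diag_nonneg hpsd k
    have hle : (star (V n) * (P n ^ 2) * V n) k k ≤ 1 := by
      have h := congrArg (fun A => A k k) hsum1
      simp only [Matrix.sum_apply, Matrix.one_apply_eq] at h
      calc (star (V n) * (P n ^ 2) * V n) k k
          ≤ ∑ m, (star (V n) * (P m ^ 2) * V n) k k :=
            Finset.single_le_sum (fun m _ => hterm m) (Finset.mem_univ n)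
        _ = 1 := h
    have hMk : ((∑ j, D n k j : ℝ) : ℂ) = (star (M n) * M n) k k := by
      rw [Matrix.mul_apply]
      push_cast
      refine Finset.sum_congr rfl (fun j _ => ?_)
      rw [Matrix.star_apply, hD, ← Complex.mul_conj (M n j k), Complex.star_def]
      ring
    rw [hMsM] at hMk
    have : ((∑ j, D n k j : ℝ) : ℂ) ≤ 1 := hMk ▸ hle
    exact_mod_cast this
  have hvn : vnEntropy ρ = ∑ j, Real.negMulLog (lam j) := by
    rw [vnEntropy, dif_pos hρ.1]
  calc vnEntropy ρ = ∑ j, Real.negMulLog (lam j) := hvn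
    _ = ∑ j, (∑ n, ∑ k, D n k j) * Real.negMulLog (lam j) := by
        refine Finset.sum_congr rfl (fun j _ => ?_)
        rw [hb j, one_mul]
    _ = ∑ n, ∑ k, ∑ j, D n k j * Real.negMulLog (lam j) := by
        simp_rw [Finset.sum_mul]
        rw [Finset.sum_comm]
        refine Finset.sum_congr rfl (fun n _ => Finset.sum_comm)
    _ ≤ ∑ n, ∑ k, Real.negMulLog (∑ j, D n k j * lam j) := by
        refine Finset.sum_le_sum (fun n _ => Finset.sum_le_sum (fun k _ => ?_))
        exact jensen_negMulLog _ _ (hD0 n k) (hc n k) hlam0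
    _ = ∑ n, ∑ k, Real.negMulLog (μ n k) := by
        refine Finset.sum_congr rfl (fun n _ => Finset.sum_congr rfl (fun k _ => ?_))
        rw [← ha n k]
    _ = ∑ n, (Real.negMulLog (p n)
          + (if 0 < p n then p n * vnEntropy ((p n)⁻¹ • Q n) else 0)) :=
        Finset.sum_congr rfl (fun n _ => hent n)
    _ = shannonEntropy p + ∑ n ∈ Finset.univ.filter (fun n => 0 < p n),
          p n * vnEntropy ((p n)⁻¹ • Q n) := by
        rw [Finset.sum_add_distrib]
        congr 1
        rw [Finset.sum_filter]
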